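/- Let K be an infinite field and k ≥ 0. Call a subset C ⊆ K^k a box cell if C = ∏_{i=1}^k S_i with each S_i ∈ {K, K∖{0}, {0}}. Suppose X ⊆ K^k is a disjoint union of finitely many box cells. Then there exists a finite decreasing chain X = X_0 ⊇ X_1 ⊇ ⋯ ⊇ X_m = ∅ such that each X_j is closed in X for the Zariski topology induced from K^k, and each difference X_{j−1} ∖ X_j is a box cell. -/

import Mathlib

/-- A subset of `K^k` is Zariski closed if it is the zero locus of an ideal of
polynomials. -/
def ZarClosed (K : Type*) [Field K] (k : ℕ) (C : Set (Fin k → K)) : Prop :=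
  ∃ I : Ideal (MvPolynomial (Fin k) K), C = MvPolynomial.zeroLocus K I

/-- A box cell in `K^k`: a product `∏ S_i` with each `S_i ∈ {K, K∖{0}, {0}}`. -/
def IsBoxCell (K : Type*) [Field K] (k : ℕ) (C : Set (Fin k → K)) : Prop :=
  ∃ S : Fin k → Set K,
    (∀ i, S i = Set.univ ∨ S i = {(0 : K)}ᶜ ∨ S i = {(0 : K)}) ∧
    C = {x | ∀ i, x i ∈ S i}

namespace BoxCellAux

variable {K : Type*} [Field K] {k : ℕ}

/-- The binary cell associated to a profile `σ`. -/
def bcell (σ : Fin k → Bool) : Set (Fin k → K) := {x | ∀ i, x i ≠ 0 ↔ σ i = true}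

/-- The Zariski closed set containing the closure of `bcell σ`. -/
def zcl (σ : Fin k → Bool) : Set (Fin k → K) := {x | ∀ i, σ i = false → x i = 0}

/-- The weight of a profile. -/
def wt (σ : Fin k → Bool) : ℕ := (Finset.univ.filter fun i => σ i = true).card

/-- The profile of a point. -/
noncomputable def prof (x : Fin k → K) : Fin k → Bool :=
  fun i => @decide (x i ≠ 0) (Classical.dec _)

lemma prof_spec (x : Fin k → K) (i : Fin k) : prof x i = true ↔ x i ≠ 0 := by
  simp [prof]

lemma mem_bcell_prof (x : Fin k → K) : x ∈ (bcell (prof x) : Set (Fin k → K)) := by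
  intro i; rw [prof_spec]

lemma eq_prof_of_mem_bcell {x : Fin k → K} {σ : Fin k → Bool} (h : x ∈ bcell σ) :
    σ = prof x := by
  funext i
  have h1 := h i
  have h2 := prof_spec x i
  cases hp : prof x i <;> cases hs : σ i <;> rw [hp] at h2 <;> rw [hs] at h1 <;>
    simp_all

lemma isBoxCell_bcell (σ : Fin k → Bool) : IsBoxCell K k (bcell σ) := by
  refine ⟨fun i => if σ i then {(0 : K)}ᶜ else {0}, fun i => ?_, ?_⟩
  · by_cases h : σ i <;> simp [h]
  · ext x
    simp only [bcell, Set.mem_setOf_eq]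
    refine forall_congr' fun i => ?_
    by_cases h : σ i <;> simp [h]

lemma zarClosed_zcl (σ : Fin k → Bool) : ZarClosed K k (zcl σ) := by
  refine ⟨Ideal.span ((fun i => MvPolynomial.X i) '' {i | σ i = false}), ?_⟩
  rw [MvPolynomial.zeroLocus_span]
  ext x
  simp only [zcl, Set.mem_setOf_eq, Set.mem_image]
  constructor
  · rintro h p ⟨i, hi, rfl⟩
    rw [MvPolynomial.aeval_X]
    exact h i hi
  · intro h i hi
    have := h (MvPolynomial.X i) ⟨i, hi, rfl⟩
    rwa [MvPolynomial.aeval_X] at this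

lemma bcell_subset_zcl (σ : Fin k → Bool) : (bcell σ : Set (Fin k → K)) ⊆ zcl σ := by
  intro x hx i hi
  by_contra h0
  have := (hx i).mp h0
  rw [hi] at this
  exact Bool.false_ne_true this

lemma zarClosed_empty : ZarClosed K k (∅ : Set (Fin k → K)) := by
  refine ⟨⊤, ?_⟩
  have := MvPolynomial.zeroLocus_top (k := K) (K := K) (σ := Fin k)
  simpa using this.symm

lemma zarClosed_union {C D : Set (Fin k → K)} (hC : ZarClosed K k C) (hD : ZarClosed K k D) :
    ZarClosed K k (C ∪ D) := by
  obtain ⟨I, rfl⟩ := hC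
  obtain ⟨J, rfl⟩ := hD
  refine ⟨I * J, ?_⟩
  ext x
  simp only [Set.mem_union, MvPolynomial.mem_zeroLocus_iff]
  constructor
  · rintro (h | h) p hp
    · exact h p (Ideal.mul_le_left hp)
    · exact h p (Ideal.mul_le_right hp)
  · intro h
    by_cases hI : ∀ p ∈ I, MvPolynomial.aeval x p = 0
    · exact Or.inl hI
    · push_neg at hI
      obtain ⟨f, hfI, hf⟩ := hI
      refine Or.inr fun g hg => ?_
      have := h (f * g) (Ideal.mul_mem_mul hfI hg)
      rw [map_mul] at this
      exact (mul_eq_zero.mp this).resolve_left hf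

lemma zarClosed_biUnion {ι : Type*} (s : Finset ι) (f : ι → Set (Fin k → K))
    (h : ∀ i ∈ s, ZarClosed K k (f i)) : ZarClosed K k (⋃ i ∈ s, f i) := by
  classical
  induction s using Finset.induction_on with
  | empty => simpa using zarClosed_empty
  | @insert a s' hns ih =>
    rw [Finset.set_biUnion_insert]
    exact zarClosed_union (h a (Finset.mem_insert_self a s'))
      (ih fun i hi => h i (Finset.mem_insert_of_mem hi))

/-- Box cell membership only depends on the zero pattern. -/
lemma mem_of_pattern {C : Set (Fin k → K)} (hC : IsBoxCell K k C) {x y : Fin k → K}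
    (hx : x ∈ C) (hxy : ∀ i, x i = 0 ↔ y i = 0) : y ∈ C := by
  obtain ⟨S, hS, rfl⟩ := hC
  intro i
  have hxi := hx i
  rcases hS i with h | h | h <;> rw [h] at hxi ⊢
  · trivial
  · simp only [Set.mem_compl_iff, Set.mem_singleton_iff] at hxi ⊢
    exact fun h0 => hxi ((hxy i).mpr h0)
  · exact (hxy i).mp hxi

lemma wt_lt_wt {σ τ : Fin k → Bool} (hle : ∀ i, τ i = true → σ i = true) (hne : τ ≠ σ) :
    wt τ < wt σ := by
  apply Finset.card_lt_card
  rw [Finset.ssubset_iff_subset_ne]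
  constructor
  · intro i hi
    simp only [Finset.mem_filter, Finset.mem_univ, true_and] at hi ⊢
    exact hle i hi
  · intro h
    apply hne
    funext i
    cases hτ : τ i
    · cases hσ : σ i
      · rfl
      · have : i ∈ Finset.univ.filter fun j => τ j = true := by
          rw [h]; simp [hσ]
        simp [hτ] at this
    · rw [hle i hτ]

/-- A point of `zcl σ` has profile pointwise below `σ`. -/
lemma prof_le_of_mem_zcl {x : Fin k → K} {σ : Fin k → Bool} (h : x ∈ (zcl σ : Set (Fin k → K)))
    (i : Fin k) (hi : prof x i = true) : σ i = true := by
  rw [prof_spec] at hi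
  cases hs : σ i
  · exact absurd (h i hs) hi
  · rfl

end BoxCellAux

open BoxCellAux in
/-- Over an infinite field `K`, if `X ⊆ K^k` is a finite disjoint union of
box cells, then there is a finite decreasing chain `X = X_0 ⊇ X_1 ⊇ ⋯ ⊇ X_m = ∅` with
each `X_j` Zariski closed in `X` (i.e. the trace on `X` of a Zariski closed subset of
`K^k`) and each difference `X_{j-1} ∖ X_j` a box cell. -/
theorem boxCell_decomposition_filtrable
    {K : Type*} [Field K] [Infinite K] (k : ℕ) (X : Set (Fin k → K))
    (hX : ∃ (n : ℕ) (cells : Fin n → Set (Fin k → K)),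
      (∀ i, IsBoxCell K k (cells i)) ∧
      (∀ i j : Fin n, i ≠ j → Disjoint (cells i) (cells j)) ∧
      X = ⋃ i, cells i) :
    ∃ (m : ℕ) (c : Fin (m + 1) → Set (Fin k → K)),
      c 0 = X ∧ c (Fin.last m) = ∅ ∧
      (∀ j : Fin m, c j.succ ⊆ c j.castSucc) ∧
      (∀ j : Fin (m + 1), ∃ C, ZarClosed K k C ∧ c j = C ∩ X) ∧
      (∀ j : Fin m, IsBoxCell K k (c j.castSucc \ c j.succ)) := by
  classical
  obtain ⟨n, cells, hcell, -, hXeq⟩ := hX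
  -- X is saturated under profiles
  have hsat : ∀ x ∈ X, (bcell (prof x) : Set (Fin k → K)) ⊆ X := by
    intro x hx y hy
    rw [hXeq] at hx ⊢
    obtain ⟨_, ⟨i, rfl⟩, hxi⟩ := hx
    refine Set.mem_iUnion.mpr ⟨i, ?_⟩
    refine mem_of_pattern (hcell i) hxi fun j => ?_
    have h1 := hy j
    rw [prof_spec] at h1
    constructor
    · intro h0
      by_contra hy0
      exact (h1.mp hy0) h0
    · intro h0
      by_contra hx0
      exact (h1.mpr hx0) h0
  -- the finite set of profiles occurring in X
  set F : Finset (Fin k → Bool) :=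
    Finset.univ.filter fun σ => (bcell σ : Set (Fin k → K)) ⊆ X with hFdef
  have hF : ∀ σ ∈ F, (bcell σ : Set (Fin k → K)) ⊆ X := fun σ hσ =>
    (Finset.mem_filter.mp hσ).2
  have hprofF : ∀ x ∈ X, prof x ∈ F := fun x hx =>
    Finset.mem_filter.mpr ⟨Finset.mem_univ _, hsat x hx⟩
  -- sort profiles by decreasing weight
  set L : List (Fin k → Bool) :=
    F.toList.mergeSort (fun σ τ => decide (wt τ ≤ wt σ)) with hLdef
  have hperm : L.Perm F.toList := List.mergeSort_perm _ _
  have hnodup : L.Nodup := hperm.nodup_iff.mpr F.nodup_toList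
  have hmemL : ∀ σ, σ ∈ L ↔ σ ∈ F := fun σ => by rw [hperm.mem_iff, Finset.mem_toList]
  have hsorted : ∀ a b : Fin L.length, a < b → wt (L.get b) ≤ wt (L.get a) := by
    have hp : List.Pairwise (fun σ τ => wt τ ≤ wt σ) L := by
      have := List.pairwise_mergeSort
        (le := fun σ τ : Fin k → Bool => decide (wt τ ≤ wt σ))
        (fun a b c h1 h2 => by
          simp only [decide_eq_true_eq] at h1 h2 ⊢; omega)
        (fun a b => by
          simp only [Bool.or_eq_true, decide_eq_true_eq]; omega) F.toList
      rw [← hLdef] at this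
      exact this.imp fun h => by simpa using h
    intro a b hab
    exact List.pairwise_iff_get.mp hp a b hab
  -- helper: points of X lie in a bcell indexed by L
  have hXmem : ∀ x ∈ X, ∃ b : Fin L.length, x ∈ (bcell (L.get b) : Set (Fin k → K)) := by
    intro x hx
    have : prof x ∈ L := (hmemL _).mpr (hprofF x hx)
    obtain ⟨b, hb⟩ := List.mem_iff_get.mp this
    exact ⟨b, hb ▸ mem_bcell_prof x⟩
  refine ⟨L.length, fun j => ⋃ (a : Fin L.length) (_ : (j : ℕ) ≤ (a : ℕ)), bcell (L.get a),
    ?_, ?_, ?_, ?_, ?_⟩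
  · -- c 0 = X
    ext x
    simp only [Set.mem_iUnion]
    constructor
    · rintro ⟨a, -, hx⟩
      exact hF _ ((hmemL _).mp (L.get_mem a)) hx
    · intro hx
      obtain ⟨b, hb⟩ := hXmem x hx
      exact ⟨b, by simp, hb⟩
  · -- c last = ∅
    ext x
    simp only [Set.mem_iUnion, Fin.val_last, Set.mem_empty_iff_false, iff_false, not_exists]
    intro a ha
    exact absurd ha (by omega)
  · -- monotone
    intro j x hx
    simp only [Set.mem_iUnion, Fin.val_succ, Fin.coe_castSucc] at hx ⊢
    obtain ⟨a, ha, hx⟩ := hx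
    exact ⟨a, by omega, hx⟩
  · -- each c j is the trace of a Zariski closed set
    intro j
    refine ⟨⋃ a ∈ Finset.univ.filter (fun a : Fin L.length => (j : ℕ) ≤ (a : ℕ)),
      zcl (L.get a), zarClosed_biUnion _ _ fun a _ => zarClosed_zcl _, ?_⟩
    ext x
    simp only [Set.mem_iUnion, Set.mem_inter_iff, Finset.mem_filter, Finset.mem_univ, true_and,
      exists_prop]
    constructor
    · rintro ⟨a, ha, hx⟩
      exact ⟨⟨a, ha, bcell_subset_zcl _ hx⟩, hF _ ((hmemL _).mp (L.get_mem a)) hx⟩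
    · rintro ⟨⟨a, ha, hxz⟩, hxX⟩
      obtain ⟨b, hb⟩ := hXmem x hxX
      refine ⟨b, ?_, hb⟩
      by_contra hbj
      push_neg at hbj
      have hba : (b : ℕ) < (a : ℕ) := by omega
      have hwt : wt (L.get a) ≤ wt (L.get b) := hsorted b a (Fin.lt_def.mpr hba)
      have hne : L.get b ≠ L.get a := fun h =>
        (by omega : (b : ℕ) ≠ (a : ℕ)) (congrArg Fin.val (hnodup.get_inj_iff.mp h))
      have hle : ∀ i, L.get b i = true → L.get a i = true := by
        intro i hi
        have : prof x i = true := by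
          rw [eq_prof_of_mem_bcell hb] at hi
          exact hi
        exact prof_le_of_mem_zcl hxz i this
      exact absurd hwt (not_le.mpr (wt_lt_wt hle hne))
  · -- differences are box cells
    intro j
    have hjm : (j : ℕ) < L.length := j.isLt
    have : (⋃ (a : Fin L.length) (_ : ((j.castSucc : Fin (L.length + 1)) : ℕ) ≤ (a : ℕ)),
        (bcell (L.get a) : Set (Fin k → K))) \ (⋃ (a : Fin L.length) (_ : ((j.succ : Fin (L.length + 1)) : ℕ) ≤ (a : ℕ)),
        bcell (L.get a)) = bcell (L.get ⟨j, hjm⟩) := by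
      ext x
      simp only [Set.mem_diff, Set.mem_iUnion, Fin.coe_castSucc, Fin.val_succ, not_exists]
      constructor
      · rintro ⟨⟨a, ha, hx⟩, hnot⟩
        have haj : (a : ℕ) = (j : ℕ) := by
          by_contra h
          exact hnot a (by omega) hx
        have : a = ⟨j, hjm⟩ := Fin.ext haj
        rwa [this] at hx
      · intro hx
        refine ⟨⟨⟨j, hjm⟩, le_refl _, hx⟩, ?_⟩
        intro a ha hxa
        have : L.get a = L.get ⟨j, hjm⟩ := by
          rw [eq_prof_of_mem_bcell hxa, eq_prof_of_mem_bcell hx]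
        have := hnodup.get_inj_iff.mp this
        have : (a : ℕ) = (j : ℕ) := congrArg Fin.val this
        omega
    rw [this]
    exact isBoxCell_bcell _
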